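/- Let B be a Garside shadow in (W,S), let g ∈ W and s ∈ S with ℓ(gs) < ℓ(g). Then for every k ≥ 0 we have ν_B^{k+1}(g) ⪯ ν_B^{k}(gs) ⪯ ν_B^{k}(g), where ν_B^k denotes the k-fold composition of ν_B (and ν_B^0 is the identity map). -/

import Mathlib

open CoxeterSystem

variable {ι W : Type} [Group W] {cm : CoxeterMatrix ι}

/-- The right weak order on `W`: `g ⪯ h` iff `ℓ(g) + ℓ(g⁻¹h) = ℓ(h)`. -/
def WLe (cs : CoxeterSystem cm W) (g h : W) : Prop :=
  cs.length g + cs.length (g⁻¹ * h) = cs.length h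

/-- `w` is a suffix of `g` if `g = u * w` with `ℓ(g) = ℓ(u) + ℓ(w)`. -/
def IsSuffixOf (cs : CoxeterSystem cm W) (w g : W) : Prop :=
  ∃ u : W, g = u * w ∧ cs.length g = cs.length u + cs.length w

/-- `j` is the join (least upper bound) of `X` with respect to the right weak order. -/
def IsJoin (cs : CoxeterSystem cm W) (X : Set W) (j : W) : Prop :=
  (∀ x ∈ X, WLe cs x j) ∧ ∀ u : W, (∀ x ∈ X, WLe cs x u) → WLe cs j u

/-- A Garside shadow: a subset of `W` containing all simple reflections, closed under
existing joins and under taking suffixes. -/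
def IsGarsideShadow (cs : CoxeterSystem cm W) (B : Set W) : Prop :=
  (∀ i : ι, cs.simple i ∈ B) ∧
  (∀ X : Set W, X ⊆ B → ∀ j : W, IsJoin cs X j → j ∈ B) ∧
  (∀ b ∈ B, ∀ w : W, IsSuffixOf cs w b → w ∈ B)

/-- `π` is the `B`-projection: `π g` is the join of `{b ∈ B : b ⪯ g}` and lies in `B`. -/
def IsGarsideProjection (cs : CoxeterSystem cm W) (B : Set W) (π : W → W) : Prop :=
  ∀ g : W, π g ∈ B ∧ IsJoin cs {b : W | b ∈ B ∧ WLe cs b g} (π g)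

/-- The voracious projection with respect to `π = π_B`: `ν_B(g) = g · π_B(g⁻¹)`. -/
def vor (π : W → W) (g : W) : W := g * π g⁻¹

/-- The language `L_g`, defined inductively: `L_id = {ε}` and
`L_g = {uv : u ∈ L_{ν_B(g)}, v a minimal length word representing ν_B(g)⁻¹g}`. -/
inductive VorL (cs : CoxeterSystem cm W) (π : W → W) : W → List ι → Prop
  | nil : VorL cs π 1 []
  | step {g : W} {u v : List ι} (hg : g ≠ 1) (hu : VorL cs π (vor π g) u)
      (hv : cs.wordProd v = (vor π g)⁻¹ * g)
      (hmin : v.length = cs.length ((vor π g)⁻¹ * g)) :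
      VorL cs π g (u ++ v)

/-- The voracious language `V_B = ⋃_{g ∈ W} L_g`. -/
def VorLang (cs : CoxeterSystem cm W) (π : W → W) : Language ι :=
  {v : List ι | ∃ g : W, VorL cs π g v}

/-- The reflection `r` separates `g` from `h`. -/
def SepElem (cs : CoxeterSystem cm W) (r g h : W) : Prop :=
  Xor' (cs.length (r * g) < cs.length g) (cs.length (r * h) < cs.length h)

/-- The reflection `r'` separates `g` from the wall of the reflection `r`. -/
def SepWall (cs : CoxeterSystem cm W) (r' g r : W) : Prop :=
  ∀ h : W, (∃ i : ι, r * h = h * cs.simple i) → SepElem cs r' g h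

/-- The wall of the reflection `r` is `m`-close to `g`: at most `m` reflections
separate `g` from the wall of `r`. -/
def MClose (cs : CoxeterSystem cm W) (m : ℕ) (g r : W) : Prop :=
  ∃ F : Finset W, F.card ≤ m ∧
    ∀ r' : W, cs.IsReflection r' → SepWall cs r' g r → r' ∈ F


-- auxiliary lemmas
private lemma wle_refl (cs : CoxeterSystem cm W) (g : W) : WLe cs g g := by
  simp [WLe]

private lemma wle_trans (cs : CoxeterSystem cm W) {a b c : W}
    (h1 : WLe cs a b) (h2 : WLe cs b c) : WLe cs a c := by
  unfold WLe at *
  have h3 : cs.length (a⁻¹ * c) ≤ cs.length (a⁻¹ * b) + cs.length (b⁻¹ * c) := by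
    have := cs.length_mul_le (a⁻¹ * b) (b⁻¹ * c)
    rwa [show a⁻¹ * b * (b⁻¹ * c) = a⁻¹ * c by group] at this
  have h4 : cs.length c ≤ cs.length a + cs.length (a⁻¹ * c) := by
    have := cs.length_mul_le a (a⁻¹ * c)
    rwa [show a * (a⁻¹ * c) = c by group] at this
  omega

private lemma pi_wle (cs : CoxeterSystem cm W) {B : Set W} {piB : W → W}
    (hpi : IsGarsideProjection cs B piB) (x : W) : WLe cs (piB x) x :=
  (hpi x).2.2 x (fun _ hb => hb.2)

private lemma wle_pi (cs : CoxeterSystem cm W) {B : Set W} {piB : W → W}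
    (hpi : IsGarsideProjection cs B piB) {b x : W} (hb : b ∈ B) (h : WLe cs b x) :
    WLe cs b (piB x) :=
  (hpi x).2.1 b ⟨hb, h⟩

/-- Key one-step facts. -/
private lemma vor_step (cs : CoxeterSystem cm W) {B : Set W} (hB : IsGarsideShadow cs B)
    {piB : W → W} (hpi : IsGarsideProjection cs B piB) {g : W} {s : ι}
    (hs : cs.length (g * cs.simple s) < cs.length g) :
    WLe cs (vor piB g) (g * cs.simple s) ∧
      WLe cs (vor piB (g * cs.simple s)) (vor piB g) := by
  have hd : cs.length (g * cs.simple s) + 1 = cs.length g := by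
    rcases cs.length_mul_simple g s with h | h
    · omega
    · exact h
  have hinv : (g * cs.simple s)⁻¹ = cs.simple s * g⁻¹ := by
    rw [mul_inv_rev, cs.inv_simple]
  have h1 : cs.length (cs.simple s * g⁻¹) + 1 = cs.length g⁻¹ := by
    rw [← hinv, cs.length_inv, cs.length_inv]; exact hd
  have hgg : cs.length g⁻¹ = cs.length g := cs.length_inv g
  have hp : cs.length (piB g⁻¹) + cs.length ((piB g⁻¹)⁻¹ * g⁻¹) = cs.length g⁻¹ :=
    pi_wle cs hpi g⁻¹
  have hq : cs.length (piB (cs.simple s * g⁻¹)) +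
      cs.length ((piB (cs.simple s * g⁻¹))⁻¹ * (cs.simple s * g⁻¹)) =
      cs.length (cs.simple s * g⁻¹) := pi_wle cs hpi _
  have hsx : WLe cs (cs.simple s) g⁻¹ := by
    unfold WLe
    rw [cs.inv_simple, cs.length_simple]
    omega
  have hsp : cs.length (cs.simple s) + cs.length ((cs.simple s)⁻¹ * piB g⁻¹) =
      cs.length (piB g⁻¹) := wle_pi cs hpi (hB.1 s) hsx
  rw [cs.length_simple, cs.inv_simple] at hsp
  -- hsp : 1 + ℓ(s * piB g⁻¹) = ℓ (piB g⁻¹)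
  have hp'B : cs.simple s * piB g⁻¹ ∈ B := by
    refine hB.2.2 _ (hpi g⁻¹).1 _ ⟨cs.simple s, ?_, ?_⟩
    · rw [← mul_assoc, cs.simple_mul_simple_self, one_mul]
    · rw [cs.length_simple]; omega
  have hp'q : cs.length (cs.simple s * piB g⁻¹) +
      cs.length ((cs.simple s * piB g⁻¹)⁻¹ * piB (cs.simple s * g⁻¹)) =
      cs.length (piB (cs.simple s * g⁻¹)) := by
    refine wle_pi cs hpi hp'B ?_
    unfold WLe
    rw [show (cs.simple s * piB g⁻¹)⁻¹ * (cs.simple s * g⁻¹) =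
      (cs.simple s)⁻¹ * (cs.simple s * ((piB g⁻¹)⁻¹ * g⁻¹)) by group, cs.inv_simple,
      ← mul_assoc, cs.simple_mul_simple_self, one_mul]
    omega
  constructor
  · -- vor g ⪯ g * s
    unfold WLe vor
    have e1 : cs.length (g * piB g⁻¹) = cs.length ((piB g⁻¹)⁻¹ * g⁻¹) := by
      rw [← cs.length_inv (g * piB g⁻¹), mul_inv_rev]
    have e2 : cs.length ((g * piB g⁻¹)⁻¹ * (g * cs.simple s)) =
        cs.length (cs.simple s * piB g⁻¹) := by
      rw [show (g * piB g⁻¹)⁻¹ * (g * cs.simple s) = ((cs.simple s)⁻¹ * piB g⁻¹)⁻¹ by group,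
        cs.inv_simple, cs.length_inv]
    have e3 : cs.length (g * cs.simple s) = cs.length (cs.simple s * g⁻¹) := by
      rw [← cs.length_inv (g * cs.simple s), hinv]
    rw [e1, e2, e3]
    omega
  · -- vor (g * s) ⪯ vor g
    unfold WLe vor
    rw [hinv]
    have e1 : cs.length (g * cs.simple s * piB (cs.simple s * g⁻¹)) =
        cs.length ((piB (cs.simple s * g⁻¹))⁻¹ * (cs.simple s * g⁻¹)) := by
      rw [← cs.length_inv (g * cs.simple s * piB (cs.simple s * g⁻¹)),
        show (g * cs.simple s * piB (cs.simple s * g⁻¹))⁻¹ =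
          (piB (cs.simple s * g⁻¹))⁻¹ * ((cs.simple s)⁻¹ * g⁻¹) by group, cs.inv_simple]
    have e2 : cs.length (g * piB g⁻¹) = cs.length ((piB g⁻¹)⁻¹ * g⁻¹) := by
      rw [← cs.length_inv (g * piB g⁻¹), mul_inv_rev]
    have e3 : cs.length ((g * cs.simple s * piB (cs.simple s * g⁻¹))⁻¹ * (g * piB g⁻¹)) =
        cs.length ((cs.simple s * piB g⁻¹)⁻¹ * piB (cs.simple s * g⁻¹)) := by
      rw [show (g * cs.simple s * piB (cs.simple s * g⁻¹))⁻¹ * (g * piB g⁻¹) =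
        (((cs.simple s)⁻¹ * piB g⁻¹)⁻¹ * piB (cs.simple s * g⁻¹))⁻¹ by group, cs.inv_simple,
        cs.length_inv]
    rw [e1, e2, e3]
    omega

/-- Monotonicity of `ν^[k]` follows from the `A(k)` statement. -/
private lemma vor_mono (cs : CoxeterSystem cm W) (piB : W → W) (k : ℕ)
    (Ak : ∀ (g : W) (s : ι), cs.length (g * cs.simple s) < cs.length g →
      WLe cs ((vor piB)^[k] (g * cs.simple s)) ((vor piB)^[k] g)) :
    ∀ h g : W, WLe cs h g → WLe cs ((vor piB)^[k] h) ((vor piB)^[k] g) := by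
  suffices H : ∀ (n : ℕ) (h g : W), cs.length (h⁻¹ * g) ≤ n → WLe cs h g →
      WLe cs ((vor piB)^[k] h) ((vor piB)^[k] g) by
    exact fun h g hw => H (cs.length (h⁻¹ * g)) h g le_rfl hw
  intro n
  induction n with
  | zero =>
    intro h g hl hw
    have h0 : h⁻¹ * g = 1 := cs.length_eq_zero_iff.mp (Nat.le_zero.mp hl)
    have : g = h := by rw [← mul_inv_cancel_left h g, h0, mul_one]
    rw [this]; exact wle_refl cs _
  | succ n ih =>
    intro h g hl hw
    by_cases hhg : h⁻¹ * g = 1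
    · have : g = h := by rw [← mul_inv_cancel_left h g, hhg, mul_one]
      rw [this]; exact wle_refl cs _
    · obtain ⟨i, hi⟩ := cs.exists_rightDescent_of_ne_one hhg
      have hi' : cs.length (h⁻¹ * g * cs.simple i) + 1 = cs.length (h⁻¹ * g) :=
        cs.isRightDescent_iff.mp hi
      have t1 : cs.length (g * cs.simple i) ≤
          cs.length h + cs.length (h⁻¹ * g * cs.simple i) := by
        have := cs.length_mul_le h (h⁻¹ * g * cs.simple i)
        rwa [show h * (h⁻¹ * g * cs.simple i) = g * cs.simple i by group] at this
      have t2 : cs.length g ≤ cs.length (g * cs.simple i) + 1 := by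
        have := cs.length_mul_le (g * cs.simple i) (cs.simple i)
        rw [mul_assoc, cs.simple_mul_simple_self, mul_one, cs.length_simple] at this
        exact this
      have e : h⁻¹ * (g * cs.simple i) = h⁻¹ * g * cs.simple i := by group
      have hw' : WLe cs h (g * cs.simple i) := by
        unfold WLe at hw ⊢
        rw [e]
        omega
      have hlt : cs.length (g * cs.simple i) < cs.length g := by
        unfold WLe at hw hw'
        rw [e] at hw'
        omega
      have hrec := ih h (g * cs.simple i) (by rw [e]; omega) hw'
      exact wle_trans cs hrec (Ak g i hlt)

/-- If `ℓ(gs) < ℓ(g)` for `s ∈ S`, then for every `k ≥ 0` we have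
`ν_B^{k+1}(g) ⪯ ν_B^k(gs) ⪯ ν_B^k(g)`. -/
theorem vor_iterate_interleave [Finite ι] (cs : CoxeterSystem cm W)
    (B : Set W) (hB : IsGarsideShadow cs B)
    (piB : W → W) (hpi : IsGarsideProjection cs B piB)
    (g : W) (s : ι) (hs : cs.length (g * cs.simple s) < cs.length g) :
    ∀ k : ℕ, WLe cs ((vor piB)^[k + 1] g) ((vor piB)^[k] (g * cs.simple s)) ∧
      WLe cs ((vor piB)^[k] (g * cs.simple s)) ((vor piB)^[k] g) := by
  
  have A : ∀ k : ℕ, ∀ (g : W) (s : ι), cs.length (g * cs.simple s) < cs.length g →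
      WLe cs ((vor piB)^[k] (g * cs.simple s)) ((vor piB)^[k] g) := by
    intro k
    induction k with
    | zero =>
      intro g s h
      simp only [Function.iterate_zero, id_eq]
      unfold WLe
      have e : (g * cs.simple s)⁻¹ * g = (cs.simple s)⁻¹ := by group
      have hd : cs.length (g * cs.simple s) + 1 = cs.length g := by
        rcases cs.length_mul_simple g s with h' | h'
        · omega
        · exact h'
      rw [e, cs.length_inv, cs.length_simple]
      omega
    | succ k ihk =>
      intro g s h
      rw [Function.iterate_succ_apply, Function.iterate_succ_apply]
      exact vor_mono cs piB k ihk _ _ (vor_step cs hB hpi h).2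
  refine fun k => ⟨?_, A k g s hs⟩
  rw [Function.iterate_succ_apply]
  exact vor_mono cs piB k (A k) _ _ (vor_step cs hB hpi hs).1
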